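/- Let μ = a·δ_{-p} + b·δ_r + c·δ_q with a, b, c > 0, p > 0, q > 0, and -p < r < q. If the signed measure μ * (t·μ) (multiplicative convolution of μ with the measure having density t with respect to μ) is nonnegative and supported in [0, ∞), then r = 0 and p = q. -/

import Mathlib

/-- Let `μ = a·δ_{-p} + b·δ_r + c·δ_q` (a finitely atomic measure, modeled in
`MonoidAlgebra ℝ ℝ`, whose multiplication is multiplicative convolution of atomic measures)
with `a, b, c > 0`, `p > 0`, `q > 0`, `-p < r < q`.  If the signed measure `μ * (t·μ)`
(with `t·μ = -pa·δ_{-p} + rb·δ_r + qc·δ_q` the measure with density `t` w.r.t. `μ`) is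
nonnegative (every atom has nonnegative coefficient) and supported in `[0, ∞)`, then
`r = 0` and `p = q`. -/
theorem stmt_2 (a b c p r q : ℝ) (ha : 0 < a) (hb : 0 < b) (hc : 0 < c)
    (hp : 0 < p) (hq : 0 < q) (hpr : -p < r) (hrq : r < q)
    (hpos : ∀ x : ℝ,
      0 ≤ ((MonoidAlgebra.single (-p) a + MonoidAlgebra.single r b + MonoidAlgebra.single q c :
          MonoidAlgebra ℝ ℝ) *
        (MonoidAlgebra.single (-p) (-p * a) + MonoidAlgebra.single r (r * b) +
          MonoidAlgebra.single q (q * c))).coeff x)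
    (hsupp : ∀ x : ℝ, x < 0 →
      ((MonoidAlgebra.single (-p) a + MonoidAlgebra.single r b + MonoidAlgebra.single q c :
          MonoidAlgebra ℝ ℝ) *
        (MonoidAlgebra.single (-p) (-p * a) + MonoidAlgebra.single r (r * b) +
          MonoidAlgebra.single q (q * c))).coeff x = 0) :
    r = 0 ∧ p = q := by
  -- Step 1: evaluate at the point `-p*q < 0` to get `p = q`.
  have h1 := hsupp (-p * q) (by nlinarith)
  simp only [mul_add, add_mul, MonoidAlgebra.single_mul_single] at h1
  simp only [MonoidAlgebra.coeff_add, MonoidAlgebra.coeff_single] at h1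
  rw [Finsupp.add_apply, Finsupp.add_apply, Finsupp.add_apply, Finsupp.add_apply,
    Finsupp.add_apply, Finsupp.add_apply, Finsupp.add_apply, Finsupp.add_apply] at h1
  simp only [Finsupp.single_apply] at h1
  rw [if_neg (show ¬(-p * -p = -p * q) by nlinarith),
      if_neg (show ¬(r * -p = -p * q) by intro h; apply absurd hrq; nlinarith),
      if_pos (show q * -p = -p * q by ring),
      if_neg (show ¬(-p * r = -p * q) by intro h; apply absurd hrq; nlinarith),
      if_neg (show ¬(r * r = -p * q) by nlinarith [sq_nonneg r]),
      if_neg (show ¬(q * r = -p * q) by intro h; apply absurd hpr; nlinarith),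
      if_neg (show ¬(r * q = -p * q) by intro h; apply absurd hpr; nlinarith),
      if_neg (show ¬(q * q = -p * q) by nlinarith), if_true] at h1
  have hpq : p = q := by nlinarith [mul_pos ha hc]
  refine ⟨?_, hpq⟩
  -- Step 2: show r = 0 by contradiction.
  rcases lt_trichotomy r 0 with hr | hr | hr
  · -- r < 0 : evaluate at `r*q < 0`.
    exfalso
    have h2 := hsupp (r * q) (by nlinarith)
    simp only [mul_add, add_mul, MonoidAlgebra.single_mul_single] at h2
    simp only [MonoidAlgebra.coeff_add, MonoidAlgebra.coeff_single] at h2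
    rw [Finsupp.add_apply, Finsupp.add_apply, Finsupp.add_apply, Finsupp.add_apply,
      Finsupp.add_apply, Finsupp.add_apply, Finsupp.add_apply, Finsupp.add_apply] at h2
    simp only [Finsupp.single_apply] at h2
    rw [if_neg (show ¬(-p * -p = r * q) by nlinarith),
        if_neg (show ¬(r * -p = r * q) by nlinarith),
        if_neg (show ¬(q * -p = r * q) by intro h; apply absurd hpr; nlinarith),
        if_neg (show ¬(-p * r = r * q) by nlinarith),
        if_neg (show ¬(r * r = r * q) by intro h; apply absurd hrq; nlinarith),
        if_pos (show q * r = r * q by ring),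
        if_neg (show ¬(-p * q = r * q) by intro h; apply absurd hpr; nlinarith),
        if_neg (show ¬(q * q = r * q) by nlinarith), if_true] at h2
    -- h2 : c*(r*b) + b*(q*c) = 0, i.e. bc(r+q)=0, so r = -q = -p : contradiction
    apply absurd hpr
    have := mul_pos hb hc
    nlinarith
  · exact hr
  · -- r > 0 : evaluate at `-p*r < 0`.
    exfalso
    have h2 := hsupp (-p * r) (by nlinarith)
    simp only [mul_add, add_mul, MonoidAlgebra.single_mul_single] at h2
    simp only [MonoidAlgebra.coeff_add, MonoidAlgebra.coeff_single] at h2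
    rw [Finsupp.add_apply, Finsupp.add_apply, Finsupp.add_apply, Finsupp.add_apply,
      Finsupp.add_apply, Finsupp.add_apply, Finsupp.add_apply, Finsupp.add_apply] at h2
    simp only [Finsupp.single_apply] at h2
    rw [if_neg (show ¬(-p * -p = -p * r) by nlinarith),
        if_pos (show r * -p = -p * r by ring),
        if_neg (show ¬(q * -p = -p * r) by intro h; apply absurd hrq; nlinarith),
        if_neg (show ¬(r * r = -p * r) by nlinarith),
        if_neg (show ¬(q * r = -p * r) by nlinarith),
        if_neg (show ¬(-p * q = -p * r) by intro h; apply absurd hrq; nlinarith),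
        if_neg (show ¬(r * q = -p * r) by nlinarith),
        if_neg (show ¬(q * q = -p * r) by nlinarith), if_true] at h2
    -- h2 : b*(-p*a) + a*(r*b) = 0, i.e. ab(r-p)=0, so r = p = q : contradiction with r < q
    apply absurd hrq
    have := mul_pos ha hb
    nlinarith [hpq]
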